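/- Let X be an n×p real matrix, w ∈ ℝ^n with 1_nᵀ·w = 1, x̄_w = Xᵀ·w, x̄ = n⁻¹·Xᵀ·1_n, X_c = (I_n − n⁻¹·1_n·1_nᵀ)·X, and X_wc = (I_n − 1_n·wᵀ)·X. Then X_wcᵀ·X_wc − X_cᵀ·X_c = n·Xᵀ·(w − n⁻¹·1_n)·(w − n⁻¹·1_n)ᵀ·X = n·(x̄_w − x̄)·(x̄_w − x̄)ᵀ, which is positive semidefinite; it is zero if x̄_w = x̄. -/

import Mathlib

open Matrix

/-- With weights `w` summing to one, `X_c` the ordinarily centered and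
`X_wc` the weighted-mean centered design matrix,
`X_wcᵀX_wc − X_cᵀX_c = n·Xᵀ(w − n⁻¹1_n)(w − n⁻¹1_n)ᵀX = n·(x̄_w − x̄)(x̄_w − x̄)ᵀ ⪰ 0`,
with equality to zero if `x̄_w = x̄`. -/
theorem weighted_centering_gram_difference (n p : ℕ) (hn : 1 ≤ n)
    (X : Matrix (Fin n) (Fin p) ℝ)
    (w : Fin n → ℝ)
    (hwsum : (1 : Fin n → ℝ) ⬝ᵥ w = 1)
    (xbar : Fin p → ℝ) (hxbar : xbar = (n : ℝ)⁻¹ • (Xᵀ *ᵥ (1 : Fin n → ℝ)))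
    (xbarw : Fin p → ℝ) (hxbarw : xbarw = Xᵀ *ᵥ w)
    (Xc : Matrix (Fin n) (Fin p) ℝ)
    (hXc : Xc = (1 - (n : ℝ)⁻¹ • vecMulVec (1 : Fin n → ℝ) (1 : Fin n → ℝ)) * X)
    (Xwc : Matrix (Fin n) (Fin p) ℝ)
    (hXwc : Xwc = (1 - vecMulVec (1 : Fin n → ℝ) w) * X) :
    Xwcᵀ * Xwc - Xcᵀ * Xc =
      (n : ℝ) •
        (Xᵀ *
          vecMulVec (w - (n : ℝ)⁻¹ • (1 : Fin n → ℝ))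
            (w - (n : ℝ)⁻¹ • (1 : Fin n → ℝ)) * X) ∧
    Xwcᵀ * Xwc - Xcᵀ * Xc = (n : ℝ) • vecMulVec (xbarw - xbar) (xbarw - xbar) ∧
    (Xwcᵀ * Xwc - Xcᵀ * Xc).PosSemidef ∧
    (xbarw = xbar → Xwcᵀ * Xwc - Xcᵀ * Xc = 0) := by
  have hn0 : (n : ℝ) ≠ 0 := Nat.cast_ne_zero.mpr (by omega)
  set T : Fin p → ℝ := fun i => ∑ k, w k * X k i with hT
  set S : Fin p → ℝ := fun i => ∑ k, X k i with hS
  have hXwc' : ∀ k i, Xwc k i = X k i - T i := by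
    intro k i
    simp [hXwc, Matrix.sub_mul, Matrix.sub_apply, mul_apply, vecMulVec_apply, hT]
  have hXc' : ∀ k i, Xc k i = X k i - (n : ℝ)⁻¹ * S i := by
    intro k i
    simp [hXc, Matrix.sub_mul, Matrix.smul_mul, Matrix.sub_apply, Matrix.smul_apply, mul_apply,
      vecMulVec_apply, hS, Finset.mul_sum]
  have hv : ∀ i, xbarw i - xbar i = T i - (n : ℝ)⁻¹ * S i := by
    intro i
    simp [hxbarw, hxbar, mulVec, dotProduct, mul_comm, hT, hS]
  have hdot : ∀ i, (∑ k, X k i * (w k - (n : ℝ)⁻¹)) = xbarw i - xbar i := by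
    intro i
    rw [hv i]
    have : ∀ k, X k i * (w k - (n : ℝ)⁻¹) = w k * X k i - (n : ℝ)⁻¹ * X k i := by
      intro k; ring
    simp only [this, Finset.sum_sub_distrib, hT, hS, ← Finset.mul_sum]
  have key : Xwcᵀ * Xwc - Xcᵀ * Xc =
      (n : ℝ) • vecMulVec (xbarw - xbar) (xbarw - xbar) := by
    ext i j
    have h1 : (Xwcᵀ * Xwc) i j = ∑ k, (X k i - T i) * (X k j - T j) := by
      simp [mul_apply, hXwc']
    have h2 : (Xcᵀ * Xc) i j
        = ∑ k, (X k i - (n : ℝ)⁻¹ * S i) * (X k j - (n : ℝ)⁻¹ * S j) := by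
      simp [mul_apply, hXc']
    have expand : ∀ c d : ℝ, ∑ k, (X k i - c) * (X k j - d)
        = (∑ k, X k i * X k j) - c * S j - d * S i + n * (c * d) := by
      intro c d
      have : ∀ k, (X k i - c) * (X k j - d)
          = X k i * X k j - c * X k j - d * X k i + c * d := by intro k; ring
      simp only [this, Finset.sum_add_distrib, Finset.sum_sub_distrib,
        ← Finset.mul_sum, Finset.sum_const, Finset.card_univ, Fintype.card_fin,
        nsmul_eq_mul, hS]
      ring
    simp only [Matrix.sub_apply, h1, h2, expand, Matrix.smul_apply, vecMulVec_apply,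
      Pi.sub_apply, hv, smul_eq_mul]
    field_simp
    ring
  have hPSD : ((n : ℝ) • vecMulVec (xbarw - xbar) (xbarw - xbar)).PosSemidef := by
    rw [posSemidef_iff_dotProduct_mulVec]
    constructor
    · ext i j
      simp [vecMulVec_apply, mul_comm]
    · intro x
      have hqv : star x ⬝ᵥ ((n : ℝ) • vecMulVec (xbarw - xbar) (xbarw - xbar)) *ᵥ x
          = (n : ℝ) * (((xbarw - xbar) ⬝ᵥ x) * ((xbarw - xbar) ⬝ᵥ x)) := by
        simp only [dotProduct, mulVec, vecMulVec_apply, Matrix.smul_apply,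
          Pi.sub_apply, smul_eq_mul, star_trivial, Finset.mul_sum,
          Finset.sum_mul]
        refine Finset.sum_congr rfl fun a _ => Finset.sum_congr rfl fun b _ => ?_
        ring
      rw [hqv]
      exact mul_nonneg (Nat.cast_nonneg n) (mul_self_nonneg _)
  refine ⟨?_, key, key ▸ hPSD, fun h => by
    rw [key, h]
    ext i j
    simp [vecMulVec_apply]⟩
  rw [key]
  have hmat : Xᵀ * vecMulVec (w - (n : ℝ)⁻¹ • (1 : Fin n → ℝ))
      (w - (n : ℝ)⁻¹ • (1 : Fin n → ℝ)) * X
      = vecMulVec (xbarw - xbar) (xbarw - xbar) := by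
    ext i j
    simp only [mul_apply, vecMulVec_apply, transpose_apply, Pi.sub_apply,
      Pi.smul_apply, Pi.one_apply, smul_eq_mul, mul_one]
    have step : ∀ x, (∑ x1, X x1 i * ((w x1 - (n : ℝ)⁻¹) * (w x - (n : ℝ)⁻¹))) * X x j
        = (xbarw i - xbar i) * ((w x - (n : ℝ)⁻¹) * X x j) := by
      intro x
      have : ∀ x1, X x1 i * ((w x1 - (n : ℝ)⁻¹) * (w x - (n : ℝ)⁻¹))
          = (X x1 i * (w x1 - (n : ℝ)⁻¹)) * (w x - (n : ℝ)⁻¹) := fun x1 => by ring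
      simp only [this, ← Finset.sum_mul, hdot i]
      ring
    simp only [step, ← Finset.mul_sum]
    have : ∑ x, (w x - (n : ℝ)⁻¹) * X x j = xbarw j - xbar j := by
      rw [← hdot j]
      exact Finset.sum_congr rfl fun k _ => mul_comm _ _
    rw [this]
  rw [hmat]
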